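/- Let R be a ring, let γ_1, …, γ_n be elements of R, and let (a_k^j)_{1≤k,j≤n} be elements of R that commute pairwise with each other and commute with every γ_i. Set T_k = Σ_{j=1}^n a_k^j γ_j for k = 1,…,n. Then [T_1, T_2, …, T_n] = Det(a)·[γ_1, γ_2, …, γ_n], where Det(a) = Σ_σ ε(σ) ∏_{k=1}^n a_k^{σ(k)} is the determinant of the matrix (a_k^j) (well defined since its entries commute). -/

import Mathlib

lemma ofFn_prod_mul {R : Type*} [Ring R] {m : ℕ} (x y : Fin m → R)
    (hxx : ∀ i j, Commute (x i) (x j)) (hxy : ∀ i j, Commute (x i) (y j)) :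
    (List.ofFn fun i => x i * y i).prod = (List.ofFn x).prod * (List.ofFn y).prod := by
  induction m with
  | zero => simp
  | succ m ih =>
    rw [List.ofFn_succ, List.ofFn_succ, List.ofFn_succ, List.prod_cons, List.prod_cons,
      List.prod_cons]
    rw [ih (fun i => x i.succ) (fun i => y i.succ) (fun i j => hxx _ _) (fun i j => hxy _ _)]
    have h : Commute (y 0) (List.ofFn fun i => x i.succ).prod := by
      apply Commute.list_prod_right
      intro z hz
      obtain ⟨i, rfl⟩ := List.mem_ofFn.mp hz
      exact (hxy _ _).symm
    calc x 0 * y 0 * ((List.ofFn fun i => x i.succ).prod * (List.ofFn fun i => y i.succ).prod)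
        = x 0 * (y 0 * (List.ofFn fun i => x i.succ).prod) * (List.ofFn fun i => y i.succ).prod := by
          rw [mul_assoc, mul_assoc, mul_assoc]
      _ = x 0 * ((List.ofFn fun i => x i.succ).prod * y 0) * (List.ofFn fun i => y i.succ).prod := by
          rw [h.eq]
      _ = x 0 * (List.ofFn fun i => x i.succ).prod * (y 0 * (List.ofFn fun i => y i.succ).prod) := by
          rw [mul_assoc, mul_assoc, mul_assoc]

lemma ofFn_prod_perm {R : Type*} [Ring R] {m : ℕ} (x : Fin m → R)
    (hxx : ∀ i j, Commute (x i) (x j)) (σ : Equiv.Perm (Fin m)) :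
    (List.ofFn fun i => x (σ i)).prod = (List.ofFn x).prod := by
  apply List.Perm.prod_eq' (σ.ofFn_comp_perm x)
  exact List.pairwise_ofFn.mpr fun i j _ => hxx _ _

/-- The multicommutator `[T_1, …, T_n] = Σ_σ ε(σ) T_{σ(1)} ⋯ T_{σ(n)}` of elements of a
(possibly noncommutative) ring. -/
noncomputable def multicom {R : Type*} [Ring R] {n : ℕ} (T : Fin n → R) : R :=
  ∑ σ : Equiv.Perm (Fin n), (Equiv.Perm.sign σ : ℤ) • (List.ofFn fun i => T (σ i)).prod

theorem multicom_smul_det {R : Type*} [Ring R] {n : ℕ} (γ : Fin n → R)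
    (a : Fin n → Fin n → R)
    (hcomm : ∀ k j k' j', Commute (a k j) (a k' j'))
    (hcommγ : ∀ k j i, Commute (a k j) (γ i)) :
    multicom (fun k => ∑ j, a k j * γ j) =
      (∑ σ : Equiv.Perm (Fin n),
          (Equiv.Perm.sign σ : ℤ) • (List.ofFn fun k => a k (σ k)).prod) * multicom γ := by
  classical
  -- Step A: expansion of each product
  have stepA : ∀ σ : Equiv.Perm (Fin n),
      (List.ofFn fun i => ∑ j, a (σ i) j * γ j).prod =
        ∑ r : Fin n → Fin n, (List.ofFn fun i => a (σ i) (r i)).prod *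
          (List.ofFn fun i => γ (r i)).prod := by
    intro σ
    have := (MultilinearMap.mkPiAlgebraFin ℤ n R).map_sum
      (g := fun i (j : Fin n) => a (σ i) j * γ j)
    simp only [MultilinearMap.mkPiAlgebraFin_apply] at this
    rw [this]
    refine Finset.sum_congr rfl fun r _ => ?_
    exact ofFn_prod_mul (fun i => a (σ i) (r i)) (fun i => γ (r i))
      (fun i j => hcomm _ _ _ _) (fun i j => hcommγ _ _ _)
  -- the inner sum vanishes for non-injective g
  have hK0 : ∀ g : Fin n → Fin n, ¬ Function.Injective g →
      (∑ σ : Equiv.Perm (Fin n),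
        (Equiv.Perm.sign σ : ℤ) • (List.ofFn fun i => γ (g (σ i))).prod) = 0 := by
    intro g hg
    obtain ⟨i, j, hgij, hij⟩ := Function.not_injective_iff.mp hg
    apply Finset.sum_involution (fun σ _ => Equiv.swap i j * σ)
    · intro σ _
      have hgs : ∀ y, g (Equiv.swap i j y) = g y := fun y => congrFun
        (funext fun z => Equiv.apply_swap_eq_self hgij z) y
      have h1 : (List.ofFn fun x => γ (g ((Equiv.swap i j * σ) x))).prod
          = (List.ofFn fun x => γ (g (σ x))).prod := by
        have he : (fun x => γ (g ((Equiv.swap i j * σ) x))) = fun x => γ (g (σ x)) :=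
          funext fun x => by rw [Equiv.Perm.mul_apply, hgs]
        rw [he]
      have h2 : ((Equiv.Perm.sign (Equiv.swap i j * σ) : ℤˣ) : ℤ)
          = -((Equiv.Perm.sign σ : ℤˣ) : ℤ) := by
        rw [Equiv.Perm.sign_mul, Equiv.Perm.sign_swap hij]
        push_cast
        ring
      rw [h1, h2, neg_smul]
      exact add_neg_cancel _
    · intro σ _ _ heq
      have : Equiv.swap i j = 1 := by
        have := congrArg (· * σ⁻¹) heq
        simpa using this
      have h4 : Equiv.swap i j j = (1 : Equiv.Perm (Fin n)) j := by rw [this]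
      simp only [Equiv.swap_apply_right, Equiv.Perm.one_apply] at h4
      exact hij h4
    · intro σ _; exact Finset.mem_univ _
    · intro σ _
      rw [← mul_assoc, Equiv.swap_mul_self, one_mul]
  -- the inner sum for a permutation
  have hKperm : ∀ τ : Equiv.Perm (Fin n),
      (∑ σ : Equiv.Perm (Fin n),
        (Equiv.Perm.sign σ : ℤ) • (List.ofFn fun i => γ (τ (σ i))).prod)
      = (Equiv.Perm.sign τ : ℤ) • multicom γ := by
    intro τ
    rw [Fintype.sum_equiv (Equiv.mulLeft τ)
      (fun σ => (Equiv.Perm.sign σ : ℤ) • (List.ofFn fun i => γ (τ (σ i))).prod)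
      (fun ρ => ((Equiv.Perm.sign τ : ℤ) * ((Equiv.Perm.sign ρ : ℤˣ) : ℤ)) •
        (List.ofFn fun i => γ (ρ i)).prod) ?_]
    · rw [multicom, Finset.smul_sum]
      exact Finset.sum_congr rfl fun ρ _ => (mul_smul _ _ _)
    · intro σ
      simp only [Equiv.coe_mulLeft, Equiv.Perm.mul_apply]
      congr 1
      rw [Equiv.Perm.sign_mul]
      rcases Int.units_eq_one_or (Equiv.Perm.sign τ) with h | h <;>
        rcases Int.units_eq_one_or (Equiv.Perm.sign σ) with h2 | h2 <;>
          rw [h, h2] <;> norm_num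
  -- main computation
  calc multicom (fun k => ∑ j, a k j * γ j)
      = ∑ σ : Equiv.Perm (Fin n), ∑ r : Fin n → Fin n,
          (Equiv.Perm.sign σ : ℤ) • ((List.ofFn fun i => a (σ i) (r i)).prod *
            (List.ofFn fun i => γ (r i)).prod) := by
        rw [multicom]
        exact Finset.sum_congr rfl fun σ _ => by rw [stepA σ, Finset.smul_sum]
    _ = ∑ σ : Equiv.Perm (Fin n), ∑ g : Fin n → Fin n,
          (Equiv.Perm.sign σ : ℤ) • ((List.ofFn fun k => a k (g k)).prod *
            (List.ofFn fun i => γ (g (σ i))).prod) := by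
        refine Finset.sum_congr rfl fun σ _ => ?_
        refine (Fintype.sum_equiv (Equiv.arrowCongr σ.symm (Equiv.refl (Fin n)))
          _ _ fun g => ?_).symm
        have harg : ∀ i, (Equiv.arrowCongr σ.symm (Equiv.refl (Fin n))) g i = g (σ i) := by
          intro i; simp [Equiv.arrowCongr]
        simp only [harg]
        congr 2
        exact (ofFn_prod_perm (fun k => a k (g k)) (fun i j => hcomm _ _ _ _) σ).symm
    _ = ∑ g : Fin n → Fin n, (List.ofFn fun k => a k (g k)).prod *
          ∑ σ : Equiv.Perm (Fin n),
            (Equiv.Perm.sign σ : ℤ) • (List.ofFn fun i => γ (g (σ i))).prod := by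
        rw [Finset.sum_comm]
        refine Finset.sum_congr rfl fun g _ => ?_
        rw [Finset.mul_sum]
        exact Finset.sum_congr rfl fun σ _ => (mul_smul_comm _ _ _).symm
    _ = ∑ g ∈ Finset.univ.filter (Function.Injective ·), (List.ofFn fun k => a k (g k)).prod *
          ∑ σ : Equiv.Perm (Fin n),
            (Equiv.Perm.sign σ : ℤ) • (List.ofFn fun i => γ (g (σ i))).prod := by
        refine (Finset.sum_subset (Finset.filter_subset _ _) fun g _ hg => ?_).symm
        have hni : ¬ Function.Injective g := fun hinj =>
          hg (Finset.mem_filter.mpr ⟨Finset.mem_univ _, hinj⟩)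
        rw [hK0 g hni, mul_zero]
    _ = ∑ τ : Equiv.Perm (Fin n), (List.ofFn fun k => a k (τ k)).prod *
          ∑ σ : Equiv.Perm (Fin n),
            (Equiv.Perm.sign σ : ℤ) • (List.ofFn fun i => γ (τ (σ i))).prod := by
        refine Finset.sum_bij (fun g h => Equiv.ofBijective g
          (Finite.injective_iff_bijective.mp (Finset.mem_filter.mp h).2))
          (fun _ _ => Finset.mem_univ _) ?_ ?_ ?_
        · intro g₁ h₁ g₂ h₂ h
          exact congrArg (fun e : Equiv.Perm (Fin n) => (e : Fin n → Fin n)) h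
        · intro τ _
          exact ⟨⇑τ, Finset.mem_filter.mpr ⟨Finset.mem_univ _, τ.injective⟩, by ext x; rfl⟩
        · intro g h; rfl
    _ = (∑ σ : Equiv.Perm (Fin n),
          (Equiv.Perm.sign σ : ℤ) • (List.ofFn fun k => a k (σ k)).prod) * multicom γ := by
        rw [Finset.sum_mul]
        refine Finset.sum_congr rfl fun τ _ => ?_
        rw [hKperm τ, mul_smul_comm, smul_mul_assoc]
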